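/- Let X be a compact metric space such that X^{slc} ≠ ∅ (i.e., X is semi-locally connected at some point). Then every homeomorphism f : X → X satisfying property (CW) has at least one almost automorphic point, i.e., A(f) ≠ ∅. -/

import Mathlib

open Metric Filter Topology Set

variable {X : Type*}

/-- The `n`-th iterate (for `n : ℤ`) of a homeomorphism `f : X ≃ₜ X`. -/
def hIter [TopologicalSpace X] (f : X ≃ₜ X) (n : ℤ) : X → X :=
  ⇑(f.toEquiv ^ n)

/-- `f` is equicontinuous: for every `ε > 0` there is `δ > 0` such that
`d(fⁿ x, fⁿ y) ≤ ε` for all `n : ℤ` whenever `d(x, y) ≤ δ`. -/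
def EquicontHomeo [MetricSpace X] (f : X ≃ₜ X) : Prop :=
  ∀ ε > (0 : ℝ), ∃ δ > (0 : ℝ), ∀ x y : X, dist x y ≤ δ →
    ∀ n : ℤ, dist (hIter f n x) (hIter f n y) ≤ ε

/-- Property (CW): `inf_{n ∈ ℤ} dist(fⁿ x, fⁿ C) > 0` for every `x ∈ X` and every
subcontinuum `C` (nonempty compact connected subset) with `x ∉ C`. -/
def PropCW [MetricSpace X] (f : X ≃ₜ X) : Prop :=
  ∀ (x : X) (C : Set X), C.Nonempty → IsCompact C → IsConnected C → x ∉ C →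
    0 < ⨅ n : ℤ, infDist (hIter f n x) (hIter f n '' C)

/-- `X` is semi-locally connected at `p`: every open neighborhood `U` of `p` contains an
open neighborhood `V` of `p` such that `X \ U` is covered by finitely many connected
components of `X \ V`. -/
def SemiLocallyConnectedAt [TopologicalSpace X] (p : X) : Prop :=
  ∀ U : Set X, IsOpen U → p ∈ U → ∃ V : Set X, IsOpen V ∧ p ∈ V ∧ V ⊆ U ∧
    ∃ 𝒞 : Finset (Set X), (∀ C ∈ 𝒞, ∃ x ∈ Vᶜ, C = connectedComponentIn Vᶜ x) ∧
      Uᶜ ⊆ ⋃ C ∈ 𝒞, C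

/-- `x` is an almost automorphic point of `f`. -/
def AlmostAutomorphicPt [MetricSpace X] (f : X ≃ₜ X) (x : X) : Prop :=
  ∀ (n : ℕ → ℤ) (y : X), Tendsto (fun i => hIter f (n i) x) atTop (𝓝 y) →
    Tendsto (fun i => hIter f (-(n i)) y) atTop (𝓝 x)

/-- A set `F ⊆ ℤ` is syndetic if it meets every interval `[n, n + l]` for some fixed `l > 0`. -/
def SyndeticZ (F : Set ℤ) : Prop :=
  ∃ l > (0 : ℤ), ∀ n : ℤ, ∃ m ∈ F, n ≤ m ∧ m ≤ n + l

/-- `x` is an almost periodic point of `f`. -/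
def AlmostPeriodicPt [TopologicalSpace X] (f : X ≃ₜ X) (x : X) : Prop :=
  ∀ U ∈ 𝓝 x, ∃ F : Set ℤ, SyndeticZ F ∧ ∀ n ∈ F, hIter f n x ∈ U

/-- `x` is a locally almost periodic point of `f`. -/
def LocallyAlmostPeriodicPt [TopologicalSpace X] (f : X ≃ₜ X) (x : X) : Prop :=
  ∀ U ∈ 𝓝 x, ∃ V ∈ 𝓝 x, V ⊆ U ∧ ∃ F : Set ℤ, SyndeticZ F ∧ ∀ n ∈ F, hIter f n '' V ⊆ U

/-- `f` is distal. -/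
def DistalHomeo [MetricSpace X] (f : X ≃ₜ X) : Prop :=
  ∀ x y : X, x ≠ y → 0 < ⨅ n : ℤ, dist (hIter f n x) (hIter f n y)

/-- `f` is transitive: some orbit `{fⁿ x : n ∈ ℤ}` is dense. -/
def TransitiveHomeo [TopologicalSpace X] (f : X ≃ₜ X) : Prop :=
  ∃ x : X, Dense (Set.range fun n : ℤ => hIter f n x)

/-- If `X^{slc} ≠ ∅`, then every homeomorphism satisfying (CW) has an
almost automorphic point. -/
theorem almostAutomorphic_nonempty_of_slc_nonempty
    [MetricSpace X] [CompactSpace X] (f : X ≃ₜ X)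
    (hslc : ∃ p : X, SemiLocallyConnectedAt p) (hcw : PropCW f) :
    ∃ x : X, AlmostAutomorphicPt f x := by
  obtain ⟨p, hp⟩ := hslc
  refine ⟨p, ?_⟩
  intro n y hny
  rw [Metric.tendsto_atTop] at hny ⊢
  intro ε hε
  obtain ⟨V, hVopen, hpV, hVU, 𝒞, h𝒞comp, h𝒞cover⟩ :=
    hp (ball p ε) isOpen_ball (mem_ball_self hε)
  have hC : ∀ C ∈ 𝒞, 0 < ⨅ m : ℤ, infDist (hIter f m p) (hIter f m '' C) := by
    intro C hCmem
    obtain ⟨x₀, hx₀, rfl⟩ := h𝒞comp C hCmem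
    have hclosed : IsClosed (Vᶜ : Set X) := hVopen.isClosed_compl
    have hconn : IsConnected (connectedComponentIn (Vᶜ : Set X) x₀) :=
      (isConnected_connectedComponentIn_iff).2 hx₀
    have hcompact : IsCompact (connectedComponentIn (Vᶜ : Set X) x₀) := by
      rw [connectedComponentIn_eq_image hx₀]
      have : CompactSpace (Vᶜ : Set X) :=
        isCompact_iff_compactSpace.mp hclosed.isCompact
      exact isClosed_connectedComponent.isCompact.image continuous_subtype_val
    refine hcw p _ hconn.nonempty hcompact hconn ?_
    intro hpc
    exact (connectedComponentIn_subset _ _ hpc) hpV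
  obtain ⟨c, hc0, hcle⟩ : ∃ c > (0 : ℝ), ∀ C ∈ 𝒞,
      c ≤ ⨅ m : ℤ, infDist (hIter f m p) (hIter f m '' C) := by
    rcases 𝒞.eq_empty_or_nonempty with h | h
    · exact ⟨1, one_pos, by simp [h]⟩
    · obtain ⟨C₀, hC₀mem, hmin⟩ := Finset.exists_min_image 𝒞
        (fun C => ⨅ m : ℤ, infDist (hIter f m p) (hIter f m '' C)) h
      exact ⟨_, hC C₀ hC₀mem, fun C hCm => hmin C hCm⟩
  obtain ⟨N, hN⟩ := hny c hc0
  refine ⟨N, fun i hi => ?_⟩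
  by_contra hcon
  have hqU : hIter f (-(n i)) y ∈ (ball p ε)ᶜ := by
    intro hmem
    exact hcon (mem_ball.mp hmem)
  obtain ⟨C, hCmem, hqC⟩ := Set.mem_iUnion₂.mp (h𝒞cover hqU)
  have hbdd : BddBelow (Set.range fun m : ℤ =>
      infDist (hIter f m p) (hIter f m '' C)) :=
    ⟨0, by rintro x ⟨m, rfl⟩; exact infDist_nonneg⟩
  have h1 : c ≤ infDist (hIter f (n i) p) (hIter f (n i) '' C) :=
    le_trans (hcle C hCmem) (ciInf_le hbdd (n i))
  have h2 : infDist (hIter f (n i) p) (hIter f (n i) '' C)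
      ≤ dist (hIter f (n i) p) (hIter f (n i) (hIter f (-(n i)) y)) :=
    infDist_le_dist_of_mem (Set.mem_image_of_mem _ hqC)
  have h3 : hIter f (n i) (hIter f (-(n i)) y) = y := by
    simp [hIter, zpow_neg]
  rw [h3] at h2
  have h4 := hN i hi
  linarith
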